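/- arXiv:1007.1796 — 2 statements merged into one kernel-verified Lean document; each statement's English description precedes it below -/
import Mathlib

section
/- For the function ψ(x) = 1 on (−1/2, 1/2) and 0 otherwise, the Wigner distribution W_ψ on ℝ² satisfies ∫_{ℝ²} |W_ψ(x,y)| dx dy = ∞. -/
open MeasureTheory Complex Real
open scoped ENNReal NNReal

noncomputable def mWigner1 (ψ₁ ψ₂ : ℝ → ℂ) (x y : ℝ) : ℂ :=
  ((2 * Real.pi)⁻¹ : ℝ) •
    ∫ τ : ℝ, ψ₁ (x + τ / 2) * (starRingEnd ℂ) (ψ₂ (x - τ / 2)) *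
      Complex.exp (-Complex.I * (τ * y))

noncomputable def indPsi : ℝ → ℂ := Set.indicator (Set.Ioo (-(1/2) : ℝ) (1/2)) 1

lemma integrand_eq (x y τ : ℝ) :
    indPsi (x + τ/2) * (starRingEnd ℂ) (indPsi (x - τ/2)) * Complex.exp (-Complex.I * (τ*y))
    = Set.indicator {τ : ℝ | x + τ/2 ∈ Set.Ioo (-(1/2):ℝ) (1/2) ∧ x - τ/2 ∈ Set.Ioo (-(1/2):ℝ) (1/2)}
        (fun τ => Complex.exp (-Complex.I*(τ*y))) τ := by
  unfold indPsi
  by_cases h1 : x + τ/2 ∈ Set.Ioo (-(1/2):ℝ) (1/2) <;>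
    by_cases h2 : x - τ/2 ∈ Set.Ioo (-(1/2):ℝ) (1/2)
  · have hm : τ ∈ {τ : ℝ | x + τ/2 ∈ Set.Ioo (-(1/2):ℝ) (1/2) ∧
        x - τ/2 ∈ Set.Ioo (-(1/2):ℝ) (1/2)} := ⟨h1, h2⟩
    rw [Set.indicator_of_mem h1, Set.indicator_of_mem h2, Set.indicator_of_mem hm]
    simp
  · rw [Set.indicator_of_notMem h2,
      Set.indicator_of_notMem (show τ ∉ _ from fun hm => h2 hm.2)]
    simp
  · rw [Set.indicator_of_notMem h1,
      Set.indicator_of_notMem (show τ ∉ _ from fun hm => h1 hm.1)]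
    simp
  · rw [Set.indicator_of_notMem h1,
      Set.indicator_of_notMem (show τ ∉ _ from fun hm => h1 hm.1)]
    simp

lemma set_eq {x : ℝ} (hx : |x| < 1/2) :
    {τ : ℝ | x + τ/2 ∈ Set.Ioo (-(1/2):ℝ) (1/2) ∧ x - τ/2 ∈ Set.Ioo (-(1/2):ℝ) (1/2)}
      = Set.Ioo (-(1-2*|x|)) (1-2*|x|) := by
  ext τ
  simp only [Set.mem_setOf_eq, Set.mem_Ioo]
  rcases abs_cases x with ⟨h, h'⟩ | ⟨h, h'⟩ <;> rw [h] <;> constructor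
  · rintro ⟨⟨a1, a2⟩, b1, b2⟩; exact ⟨by linarith, by linarith⟩
  · rintro ⟨c1, c2⟩; exact ⟨⟨by linarith, by linarith⟩, by linarith, by linarith⟩
  · rintro ⟨⟨a1, a2⟩, b1, b2⟩; exact ⟨by linarith, by linarith⟩
  · rintro ⟨c1, c2⟩; exact ⟨⟨by linarith, by linarith⟩, by linarith, by linarith⟩

lemma wigner_zero {x y : ℝ} (hx : ¬ |x| < 1/2) : mWigner1 indPsi indPsi x y = 0 := by
  unfold mWigner1
  have : ∀ τ : ℝ, indPsi (x + τ/2) * (starRingEnd ℂ) (indPsi (x - τ/2)) *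
      Complex.exp (-Complex.I * (τ*y)) = 0 := by
    intro τ
    rw [integrand_eq]
    apply Set.indicator_of_notMem
    rintro ⟨⟨a1, a2⟩, b1, b2⟩
    rcases abs_cases x with ⟨h, _⟩ | ⟨h, _⟩ <;> rw [h] at hx <;> push_neg at hx <;> linarith
  simp only [this, integral_zero, smul_zero]

lemma wigner_val {x y : ℝ} (hx : |x| < 1/2) (hy : y ≠ 0) :
    ‖mWigner1 indPsi indPsi x y‖ = |Real.sin ((1-2*|x|)*y)| / (π * |y|) := by
  set a : ℝ := 1 - 2*|x| with ha
  have ha0 : 0 < a := by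
    have := abs_nonneg x; simp only [ha]; linarith
  have hc : (-Complex.I * (y:ℂ)) ≠ 0 := by
    simp [Complex.I_ne_zero, Complex.ofReal_eq_zero, hy]
  have key : mWigner1 indPsi indPsi x y
      = ((2 * Real.pi)⁻¹ : ℝ) •
        ((Complex.exp ((-Complex.I * y) * a) - Complex.exp ((-Complex.I * y) * (-a : ℝ))) /
          (-Complex.I * y)) := by
    unfold mWigner1
    congr 1
    have : ∀ τ : ℝ, indPsi (x + τ/2) * (starRingEnd ℂ) (indPsi (x - τ/2)) *
        Complex.exp (-Complex.I * (τ*y))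
        = Set.indicator (Set.Ioo (-a) a) (fun τ : ℝ => Complex.exp ((-Complex.I*y)*τ)) τ := by
      intro τ
      rw [integrand_eq, set_eq hx]
      congr 1
      funext t
      exact congrArg Complex.exp (by push_cast; ring)
    rw [MeasureTheory.integral_congr_ae (Filter.Eventually.of_forall this),
      MeasureTheory.integral_indicator measurableSet_Ioo,
      ← MeasureTheory.integral_Ioc_eq_integral_Ioo,
      ← intervalIntegral.integral_of_le (by linarith : -a ≤ a),
      integral_exp_mul_complex hc]
  rw [key]
  have hnum : Complex.exp ((-Complex.I * y) * a) - Complex.exp ((-Complex.I * y) * ((-a : ℝ) : ℂ))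
      = -(2 * (Real.sin (y*a) : ℂ)) * Complex.I := by
    rw [show ((-Complex.I * y) * a : ℂ) = ((-(y*a) : ℝ) : ℂ) * Complex.I by push_cast; ring,
      show ((-Complex.I * y) * ((-a : ℝ) : ℂ) : ℂ) = (((y*a) : ℝ) : ℂ) * Complex.I by
        push_cast; ring,
      Complex.exp_mul_I, Complex.exp_mul_I]
    push_cast [Complex.sin_neg, Complex.cos_neg]
    ring
  rw [hnum, Complex.real_smul, norm_mul, norm_div]
  simp only [norm_mul, norm_neg, Complex.norm_I, Complex.norm_real, Real.norm_eq_abs, Complex.norm_ofNat,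
    mul_one, one_mul]
  have hπ := Real.pi_pos
  rw [abs_of_pos (by positivity : (0:ℝ) < (2*π)⁻¹), mul_comm y a]
  field_simp

lemma sin_ge_half {t : ℝ} (h1 : π/6 ≤ t) (h2 : t ≤ 5*π/6) : 1/2 ≤ Real.sin t := by
  have hπ := Real.pi_pos
  rcases le_total t (π/2) with h | h
  · calc (1:ℝ)/2 = Real.sin (π/6) := Real.sin_pi_div_six.symm
    _ ≤ Real.sin t := Real.sin_le_sin_of_le_of_le_pi_div_two (by linarith) h h1
  · calc (1:ℝ)/2 = Real.sin (π/6) := Real.sin_pi_div_six.symm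
    _ ≤ Real.sin (π - t) := Real.sin_le_sin_of_le_of_le_pi_div_two (by linarith)
        (by linarith) (by linarith)
    _ = Real.sin t := Real.sin_pi_sub t

lemma harmonic_top : ∑' k : ℕ, ENNReal.ofReal (1/((k:ℝ)+1)) = ⊤ := by
  by_contra h
  have hsum : Summable (fun k : ℕ => Real.toNNReal (1/((k:ℝ)+1))) := by
    rw [← ENNReal.tsum_coe_ne_top_iff_summable]
    exact h
  have hsum2 : Summable (fun k : ℕ => 1/((k:ℝ)+1)) := by
    have := NNReal.summable_coe.mpr hsum
    convert this using 2 with k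
    rw [Real.coe_toNNReal _ (by positivity)]
  have : Summable (fun n : ℕ => 1/(n:ℝ)) := by
    rw [← summable_nat_add_iff 1]
    convert hsum2 using 2 with k
    · rfl
    · simp
  exact Real.not_summable_one_div_natCast this

lemma div_lemma {a : ℝ} (ha : 1/2 ≤ a) (ha1 : a ≤ 1) :
    ∫⁻ y : ℝ, ENNReal.ofReal (|Real.sin (a*y)| / (π * |y|)) = ⊤ := by
  have hπ := Real.pi_pos
  have ha0 : 0 < a := by linarith
  set J : ℕ → Set ℝ := fun k => Set.Ioo ((k*π+π/6)/a) ((k*π+5*π/6)/a) with hJ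
  have hJm : ∀ k, MeasurableSet (J k) := fun k => measurableSet_Ioo
  have key : ∀ k l : ℕ, k < l → Disjoint (J k) (J l) := by
    intro k l hkl
    rw [Set.disjoint_left]
    intro y hy1 hy2
    have hkl' : (k:ℝ) + 1 ≤ l := by exact_mod_cast hkl
    rw [hJ, Set.mem_Ioo] at hy1 hy2
    have h1 : y * a < k*π+5*π/6 := by
      have := hy1.2; rwa [lt_div_iff₀ ha0] at this
    have h2 : (l:ℝ)*π+π/6 < y * a := by
      have := hy2.1; rwa [div_lt_iff₀ ha0] at this
    nlinarith
  have hdisj : Pairwise (Function.onFun Disjoint J) := fun k l hkl =>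
    hkl.lt_or_gt.elim (key k l) (fun h => (key l k h).symm)
  have hbound : ∀ k : ℕ, ENNReal.ofReal ((1/(6*π)) * (1/((k:ℝ)+1)))
      ≤ ∫⁻ y in J k, ENNReal.ofReal (|Real.sin (a*y)| / (π * |y|)) := by
    intro k
    have hkπ : (0:ℝ) ≤ (k:ℝ)*π := by positivity
    have hlow : 0 < ((k:ℝ)*π+π/6)/a := by positivity
    have hpt : ∀ y ∈ J k, ENNReal.ofReal ((1/2) / (2*π^2*((k:ℝ)+1)))
        ≤ ENNReal.ofReal (|Real.sin (a*y)| / (π * |y|)) := by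
      intro y hy
      rw [hJ, Set.mem_Ioo] at hy
      have hy0 : 0 < y := lt_trans hlow hy.1
      have hay1 : (k:ℝ)*π+π/6 < a*y := by
        have := hy.1; rw [div_lt_iff₀ ha0] at this; linarith [this]
      have hay2 : a*y < (k:ℝ)*π+5*π/6 := by
        have := hy.2; rw [lt_div_iff₀ ha0] at this; linarith [this]
      have hsin : 1/2 ≤ |Real.sin (a*y)| := by
        have ht := Real.sin_add_nat_mul_pi (a*y - k*π) k
        have harg : a*y - ↑k*π + ↑k*π = a*y := by ring
        rw [harg] at ht
        rw [ht, abs_mul, _root_.abs_pow, _root_.abs_neg, abs_one, one_pow, one_mul]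
        have := sin_ge_half (t := a*y - k*π) (by linarith) (by linarith)
        calc (1:ℝ)/2 ≤ Real.sin (a*y - k*π) := this
        _ ≤ |Real.sin (a*y - k*π)| := le_abs_self _
      have hyb : π * |y| ≤ 2*π^2*((k:ℝ)+1) := by
        rw [abs_of_pos hy0]
        have hy2' : y < ((k:ℝ)*π+5*π/6)/a := hy.2
        have : y ≤ 2*((k:ℝ)*π+5*π/6) := by
          have h5 : ((k:ℝ)*π+5*π/6)/a ≤ ((k:ℝ)*π+5*π/6)/(1/2) := by
            apply div_le_div_of_nonneg_left (by positivity) (by norm_num) ha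
          rw [div_div_eq_mul_div, div_one] at h5  -- (x)/(1/2) = 2x ?
          nlinarith [hy2', h5]
        nlinarith [Real.pi_pos]
      apply ENNReal.ofReal_le_ofReal
      exact div_le_div₀ (abs_nonneg _) hsin (by positivity) hyb
    calc ENNReal.ofReal ((1/(6*π)) * (1/((k:ℝ)+1)))
        = ENNReal.ofReal ((1/2) / (2*π^2*((k:ℝ)+1)) * (2*π/3)) := by
          congr 1
          field_simp
          ring
      _ ≤ ENNReal.ofReal ((1/2) / (2*π^2*((k:ℝ)+1)) * ((2*π/3)/a)) := by
          apply ENNReal.ofReal_le_ofReal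
          apply mul_le_mul_of_nonneg_left _ (by positivity)
          rw [le_div_iff₀ ha0]
          nlinarith
      _ = ENNReal.ofReal ((1/2) / (2*π^2*((k:ℝ)+1))) * volume (J k) := by
          rw [hJ, Real.volume_Ioo, show ((k:ℝ)*π+5*π/6)/a - ((k:ℝ)*π+π/6)/a = (2*π/3)/a by
            field_simp; ring, ← ENNReal.ofReal_mul (by positivity)]
      _ = ∫⁻ _ in J k, ENNReal.ofReal ((1/2) / (2*π^2*((k:ℝ)+1))) := by
          rw [setLIntegral_const]
      _ ≤ ∫⁻ y in J k, ENNReal.ofReal (|Real.sin (a*y)| / (π * |y|)) :=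
          setLIntegral_mono' (hJm k) hpt
  refine top_unique ?_
  calc (⊤ : ℝ≥0∞) = ENNReal.ofReal (1/(6*π)) * ∑' k : ℕ, ENNReal.ofReal (1/((k:ℝ)+1)) := by
        rw [harmonic_top, ENNReal.mul_top]
        simp only [ne_eq, ENNReal.ofReal_eq_zero, not_le]
        positivity
    _ = ∑' k : ℕ, ENNReal.ofReal ((1/(6*π)) * (1/((k:ℝ)+1))) := by
        rw [← ENNReal.tsum_mul_left]
        congr 1
        funext k
        rw [ENNReal.ofReal_mul (by positivity)]
    _ ≤ ∑' k : ℕ, ∫⁻ y in J k, ENNReal.ofReal (|Real.sin (a*y)| / (π * |y|)) :=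
        ENNReal.tsum_le_tsum hbound
    _ = ∫⁻ y in ⋃ k, J k, ENNReal.ofReal (|Real.sin (a*y)| / (π * |y|)) :=
        (lintegral_iUnion hJm hdisj _).symm
    _ ≤ ∫⁻ y : ℝ, ENNReal.ofReal (|Real.sin (a*y)| / (π * |y|)) :=
        setLIntegral_le_lintegral _ _

noncomputable def gfun (p : ℝ × ℝ) : ℝ≥0∞ :=
  if |p.1| < 1/2 then ENNReal.ofReal (|Real.sin ((1-2*|p.1|) * p.2)| / (π * |p.2|)) else 0

lemma gfun_measurable : Measurable gfun := by
  apply Measurable.ite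
  · exact measurableSet_lt (by fun_prop) measurable_const
  · fun_prop
  · exact measurable_const

theorem wigner_indicator_not_integrable :
    ∫⁻ p : ℝ × ℝ, ENNReal.ofReal ‖mWigner1 indPsi indPsi p.1 p.2‖ = ⊤ := by
  have hae : (fun p : ℝ × ℝ => ENNReal.ofReal ‖mWigner1 indPsi indPsi p.1 p.2‖)
      =ᵐ[volume] gfun := by
    have hnull : (volume : Measure (ℝ × ℝ)) {p : ℝ × ℝ | p.2 = 0} = 0 := by
      have hset : {p : ℝ × ℝ | p.2 = 0} = Set.univ ×ˢ ({0} : Set ℝ) := by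
        ext ⟨x, y⟩; simp [eq_comm]
      rw [hset, Measure.volume_eq_prod, Measure.prod_prod, measure_singleton, mul_zero]
    rw [Filter.EventuallyEq, ae_iff]
    refine measure_mono_null ?_ hnull
    intro p hp
    simp only [Set.mem_setOf_eq] at hp ⊢
    by_contra h2
    apply hp
    by_cases hx : |p.1| < 1/2
    · rw [wigner_val hx h2]
      simp only [gfun, if_pos hx]
    · rw [wigner_zero hx]
      simp only [gfun, if_neg hx, map_zero, norm_zero, ENNReal.ofReal_zero]
  rw [lintegral_congr_ae hae,
    Measure.volume_eq_prod ℝ ℝ,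
    lintegral_prod _ gfun_measurable.aemeasurable]
  have hinner : ∀ x ∈ Set.Ioo (-(1/4):ℝ) (1/4), ∫⁻ y, gfun (x, y) = ⊤ := by
    intro x hx
    rw [Set.mem_Ioo] at hx
    have hx4 : |x| < 1/4 := abs_lt.mpr ⟨by linarith [hx.1], hx.2⟩
    have hx2 : |x| < 1/2 := by linarith
    have heq : ∀ y : ℝ, gfun (x, y)
        = ENNReal.ofReal (|Real.sin ((1-2*|x|)*y)| / (π * |y|)) := by
      intro y; simp only [gfun, if_pos hx2]
    simp only [heq]
    exact div_lemma (by linarith) (by linarith [abs_nonneg x])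
  refine top_unique ?_
  calc (⊤ : ℝ≥0∞) = ∫⁻ _ in Set.Ioo (-(1/4):ℝ) (1/4), (⊤:ℝ≥0∞) := by
        rw [setLIntegral_const, Real.volume_Ioo, ENNReal.top_mul] <;> norm_num
    _ ≤ ∫⁻ x in Set.Ioo (-(1/4):ℝ) (1/4), ∫⁻ y, gfun (x, y) :=
        setLIntegral_mono' measurableSet_Ioo (fun x hx => (hinner x hx).symm.le)
    _ ≤ ∫⁻ x, ∫⁻ y, gfun (x, y) := setLIntegral_le_lintegral _ _
end

section
/- (Flandrin) For every r ≥ 0, the integral of the Wigner distribution of the 1D Hermite function h_λ over the centered disc of radius r satisfies ∫_{|z|≤r} (−1)^λ e^{−|z|²} L_λ(2|z|²) dz ≤ ∫_{|z|≤r} e^{−|z|²} dz = π(1 − e^{−r²}), with strict inequality for λ > 0 and r > 0. -/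
open MeasureTheory Complex Real

noncomputable def laguerre0 (lam : ℕ) (x : ℝ) : ℝ :=
  ∑ i ∈ Finset.range (lam + 1),
    (-1 : ℝ) ^ i * (Nat.choose lam (lam - i) : ℝ) / (Nat.factorial i : ℝ) * x ^ i

/-- derivative of `laguerre0 k` -/
noncomputable def lagD (k : ℕ) (x : ℝ) : ℝ :=
  ∑ j ∈ Finset.range k,
    (-1 : ℝ) ^ (j+1) * (Nat.choose k (k - (j+1)) : ℝ) / (Nat.factorial j : ℝ) * x ^ j

lemma laguerre0_zero (x : ℝ) : laguerre0 0 x = 1 := by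
  simp [laguerre0]

lemma laguerre0_at_zero (k : ℕ) : laguerre0 k 0 = 1 := by
  rw [laguerre0, Finset.sum_eq_single 0]
  · simp
  · intro i _ hi
    rw [zero_pow hi, mul_zero]
  · intro h; exact absurd (Finset.mem_range.2 (Nat.succ_pos k)) h

lemma hasDerivAt_laguerre0 (k : ℕ) (x : ℝ) :
    HasDerivAt (fun y => laguerre0 k y) (lagD k x) x := by
  have h : HasDerivAt (fun y => laguerre0 k y)
      (∑ i ∈ Finset.range (k+1),
        (-1 : ℝ) ^ i * (Nat.choose k (k - i) : ℝ) / (Nat.factorial i : ℝ) * (i * x ^ (i-1))) x := by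
    apply HasDerivAt.fun_sum
    intro i _
    exact (hasDerivAt_pow i x).const_mul _
  convert h using 1
  rw [Finset.sum_range_succ' (fun i => (-1 : ℝ) ^ i * (Nat.choose k (k - i) : ℝ) / (Nat.factorial i : ℝ) * (i * x ^ (i-1)))]
  simp only [Nat.cast_zero, zero_mul, mul_zero, add_zero]
  unfold lagD
  apply Finset.sum_congr rfl
  intro j _
  have hfac : (Nat.factorial (j+1) : ℝ) = (j+1) * Nat.factorial j := by
    push_cast [Nat.factorial_succ]; ring
  have h1 : (Nat.factorial j : ℝ) ≠ 0 := Nat.cast_ne_zero.2 (Nat.factorial_ne_zero j)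
  have h2 : ((j:ℝ)+1) ≠ 0 := by positivity
  rw [hfac]
  push_cast
  field_simp

lemma lagD_zero (x : ℝ) : lagD 0 x = 0 := by simp [lagD]

lemma lagD_succ (k : ℕ) (x : ℝ) : lagD (k+1) x = lagD k x - laguerre0 k x := by
  unfold lagD laguerre0
  rw [Finset.sum_range_succ (fun j => (-1 : ℝ) ^ (j+1) * (Nat.choose (k+1) (k+1 - (j+1)) : ℝ) / (Nat.factorial j : ℝ) * x ^ j),
      Finset.sum_range_succ (fun i => (-1 : ℝ) ^ i * (Nat.choose k (k - i) : ℝ) / (Nat.factorial i : ℝ) * x ^ i)]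
  have key : ∀ j ∈ Finset.range k,
      (-1 : ℝ) ^ (j+1) * (Nat.choose (k+1) (k+1 - (j+1)) : ℝ) / (Nat.factorial j : ℝ) * x ^ j
      = (-1 : ℝ) ^ (j+1) * (Nat.choose k (k - (j+1)) : ℝ) / (Nat.factorial j : ℝ) * x ^ j
        - (-1 : ℝ) ^ j * (Nat.choose k (k - j) : ℝ) / (Nat.factorial j : ℝ) * x ^ j := by
    intro j hj
    have hjk : j < k := Finset.mem_range.1 hj
    have hch : Nat.choose (k+1) (k+1-(j+1)) = Nat.choose k (k-(j+1)) + Nat.choose k (k-j) := by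
      have e1 : k+1-(j+1) = (k-(j+1)) + 1 := by omega
      have e2 : k - j = (k - (j+1)) + 1 := by omega
      rw [e1, Nat.choose_succ_succ]
      have e3 : (k - (j+1)).succ = k - j := by omega
      rw [e3]
    rw [hch]
    push_cast
    rw [pow_succ]
    ring
  rw [Finset.sum_congr rfl key, Finset.sum_sub_distrib]
  have htop : (-1 : ℝ) ^ (k+1) * (Nat.choose (k+1) (k+1 - (k+1)) : ℝ) / (Nat.factorial k : ℝ) * x ^ k
      = - ((-1 : ℝ) ^ k * (Nat.choose k (k - k) : ℝ) / (Nat.factorial k : ℝ) * x ^ k) := by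
    simp only [Nat.sub_self, Nat.choose_zero_right, Nat.cast_one, pow_succ]
    ring
  rw [htop]
  ring

/-- alternating partial sums of Laguerre polynomials -/
noncomputable def TT (n : ℕ) (x : ℝ) : ℝ :=
  ∑ k ∈ Finset.range (n+1), (-1 : ℝ) ^ k * laguerre0 k x

noncomputable def dTT (n : ℕ) (x : ℝ) : ℝ :=
  ∑ k ∈ Finset.range (n+1), (-1 : ℝ) ^ k * lagD k x

lemma hasDerivAt_TT (n : ℕ) (x : ℝ) :
    HasDerivAt (fun y => TT n y) (dTT n x) x := by
  apply HasDerivAt.fun_sum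
  intro k _
  exact (hasDerivAt_laguerre0 k x).const_mul _

lemma TT_succ (n : ℕ) (x : ℝ) :
    TT (n+1) x = TT n x + (-1:ℝ)^(n+1) * laguerre0 (n+1) x := by
  unfold TT
  rw [Finset.sum_range_succ]

lemma dTT_succ (n : ℕ) (x : ℝ) :
    dTT (n+1) x = dTT n x + (-1:ℝ)^(n+1) * lagD (n+1) x := by
  unfold dTT
  rw [Finset.sum_range_succ]

lemma TT_zero_fn (x : ℝ) : TT 0 x = 1 := by
  simp [TT, laguerre0_zero]

/-- key derivative relation for alternating Laguerre sums -/
lemma iT : ∀ (n : ℕ) (x : ℝ), dTT (n+1) x + dTT n x = TT n x := by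
  intro n
  induction n with
  | zero =>
    intro x
    have h2 : lagD 1 x = lagD 0 x - laguerre0 0 x := lagD_succ 0 x
    simp [dTT, TT, Finset.sum_range_succ, lagD_zero, laguerre0_zero, h2]
  | succ n ih =>
    intro x
    have h1 : dTT (n+2) x = dTT (n+1) x + (-1:ℝ)^(n+2) * lagD (n+2) x := dTT_succ (n+1) x
    have h2 : lagD (n+2) x = lagD (n+1) x - laguerre0 (n+1) x := lagD_succ (n+1) x
    have h3 := ih x
    have key : dTT (n+2) x + dTT (n+1) x
        = (dTT (n+1) x + dTT n x) + (-1:ℝ)^(n+1) * laguerre0 (n+1) x := by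
      rw [h1, h2, dTT_succ n x]; ring
    rw [key, h3, TT_succ]

/-- physicists' Hermite polynomials as functions -/
noncomputable def Hh : ℕ → ℝ → ℝ
  | 0 => fun _ => 1
  | 1 => fun y => 2*y
  | (n+2) => fun y => 2*y*Hh (n+1) y - 2*(n+1)*Hh n y

lemma Hh_two_step (m : ℕ) (y : ℝ) :
    Hh (m+2) y = 2*y*Hh (m+1) y - 2*((m:ℝ)+1)*Hh m y := by
  simp only [Hh]
  try push_cast
  try ring

lemma Hh_succ_eq (n : ℕ) (y : ℝ) :
    Hh (n+1) y = 2*y*Hh n y - 2*(n:ℝ)*Hh (n-1) y := by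
  match n with
  | 0 => simp [Hh]
  | (m+1) =>
    have := Hh_two_step m y
    simpa using this

lemma hasDerivAt_Hh : ∀ (n : ℕ) (y : ℝ), HasDerivAt (Hh n) (2*(n:ℝ)*Hh (n-1) y) y := by
  intro n
  induction n using Nat.strong_induction_on with
  | _ n ih =>
    match n with
    | 0 => intro y; simpa [Hh] using (hasDerivAt_const y (1:ℝ))
    | 1 =>
      intro y
      have h : HasDerivAt (fun y : ℝ => 2*y) 2 y := by
        simpa using (hasDerivAt_id y).const_mul (2:ℝ)
      have hfn : Hh 1 = fun y : ℝ => 2*y := by funext t; simp [Hh]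
      rw [hfn]
      have e : 2*((1:ℕ):ℝ)*Hh (1-1) y = 2 := by norm_num [Hh]
      rw [e]
      exact h
    | (m+2) =>
      intro y
      have ih1 := ih (m+1) (by omega) y
      have ih0 := ih m (by omega) y
      have ha : HasDerivAt (fun y : ℝ => 2*y) 2 y := by
        simpa using (hasDerivAt_id y).const_mul (2:ℝ)
      have h1 := ha.fun_mul ih1
      have h2 : HasDerivAt (fun t => 2*((m:ℝ)+1)*Hh m t)
          (2*((m:ℝ)+1)*(2*(m:ℝ)*Hh (m-1) y)) y := ih0.const_mul _
      have hfun : Hh (m+2) = fun t => 2*t*Hh (m+1) t - 2*((m:ℝ)+1)*Hh m t := by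
        funext t
        exact Hh_two_step m t
      rw [hfun]
      refine (h1.fun_sub h2).congr_deriv ?_
      have e1 : (m+2)-1 = m+1 := rfl
      have e2 : (m+1)-1 = m := rfl
      rw [e1, e2]
      have hrec : Hh (m+1) y = 2*y*Hh m y - 2*(m:ℝ)*Hh (m-1) y := Hh_succ_eq m y
      rw [hrec]
      push_cast
      ring

/-- normalized Hermite squares -/
noncomputable def eH (m : ℕ) (y : ℝ) : ℝ := Hh m y ^ 2 / (2^m * Nat.factorial m)

noncomputable def deH (m : ℕ) (y : ℝ) : ℝ :=
  2 * Hh m y * (2*(m:ℝ)*Hh (m-1) y) / (2^m * Nat.factorial m)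

lemma eH_nonneg (m : ℕ) (y : ℝ) : 0 ≤ eH m y := by
  apply div_nonneg (sq_nonneg _)
  positivity

lemma eH_zero_fn (y : ℝ) : eH 0 y = 1 := by simp [eH, Hh]

lemma eH_one (y : ℝ) : eH 1 y = 2*y^2 := by
  simp [eH, Hh]
  ring

lemma deH_zero_fn (y : ℝ) : deH 0 y = 0 := by simp [deH]

lemma hasDerivAt_eH (m : ℕ) (y : ℝ) : HasDerivAt (eH m) (deH m y) y := by
  have h := ((hasDerivAt_Hh m y).fun_pow 2).div_const ((2:ℝ)^m * Nat.factorial m)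
  refine h.congr_deriv ?_
  simp [deH]
  try ring

lemma fact_cast_pos (m : ℕ) : (0:ℝ) < 2^m * Nat.factorial m := by
  have : (0:ℝ) < (Nat.factorial m : ℝ) := by
    exact_mod_cast Nat.factorial_pos m
  positivity

/-- the crucial pair identity: (e_m + e_{m+1})' = 4y e_m -/
lemma deH_pair (m : ℕ) (y : ℝ) : deH m y + deH (m+1) y = 4*y*eH m y := by
  have hfac : (Nat.factorial (m+1) : ℝ) = ((m:ℝ)+1) * Nat.factorial m := by
    push_cast [Nat.factorial_succ]; ring
  have h1 : deH (m+1) y = 2 * Hh (m+1) y * Hh m y / (2^m * Nat.factorial m) := by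
    unfold deH
    have e2 : (m+1)-1 = m := rfl
    rw [e2, hfac]
    have hm : ((m:ℝ)+1) ≠ 0 := by positivity
    have hp : ((2:ℝ)^m) ≠ 0 := by positivity
    have hf : (Nat.factorial m : ℝ) ≠ 0 := ne_of_gt (by exact_mod_cast Nat.factorial_pos m)
    push_cast
    rw [pow_succ]
    field_simp
  rw [h1]
  unfold deH eH
  have hrec := Hh_succ_eq m y
  rw [hrec]
  have hp := fact_cast_pos m
  field_simp
  ring

/-- coefficients with generating function (1-w²)^{-1/2} -/
noncomputable def kap : ℕ → ℝ
  | 0 => 1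
  | 1 => 0
  | (j+2) => kap j * ((j:ℝ)+1) / ((j:ℝ)+2)

lemma kap_nonneg : ∀ j, 0 ≤ kap j := by
  intro j
  induction j using Nat.strong_induction_on with
  | _ j ih =>
    match j with
    | 0 => norm_num [kap]
    | 1 => norm_num [kap]
    | (m+2) =>
      have h := ih m (by omega)
      show 0 ≤ kap m * ((m:ℝ)+1) / ((m:ℝ)+2)
      positivity

lemma kap_even_pos : ∀ j, 0 < kap (2*j) := by
  intro j
  induction j with
  | zero => norm_num [kap]
  | succ m ih =>
    have e : 2*(m+1) = (2*m)+2 := by ring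
    rw [e]
    have hdef : kap ((2*m)+2) = kap (2*m) * (((2*m:ℕ):ℝ)+1) / (((2*m:ℕ):ℝ)+2) := rfl
    rw [hdef]
    apply div_pos (mul_pos ih (by positivity)) (by positivity)

lemma Hh_at_zero_succ_succ (m : ℕ) : Hh (m+2) 0 = -2*((m:ℝ)+1) * Hh m 0 := by
  rw [Hh_two_step]
  ring

/-- values of eH at 0 agree with kap -/
lemma eH_at_zero : ∀ m, eH m 0 = kap m := by
  intro m
  induction m using Nat.strong_induction_on with
  | _ m ih =>
    match m with
    | 0 => simp [eH, Hh, kap]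
    | 1 => simp [eH, Hh, kap]
    | (j+2) =>
      have h := ih j (by omega)
      show eH (j+2) 0 = kap j * ((j:ℝ)+1) / ((j:ℝ)+2)
      rw [← h]
      unfold eH
      rw [Hh_at_zero_succ_succ]
      have hfac2 : (Nat.factorial (j+2) : ℝ) = ((j:ℝ)+2) * (((j:ℝ)+1) * Nat.factorial j) := by
        push_cast [Nat.factorial_succ]; ring
      rw [hfac2]
      have hp := fact_cast_pos j
      have h1 : ((j:ℝ)+1) ≠ 0 := by positivity
      have h2 : ((j:ℝ)+2) ≠ 0 := by positivity
      rw [pow_succ, pow_succ]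
      field_simp
      ring

lemma kap_one : kap 1 = 0 := rfl
lemma kap_zero : kap 0 = 1 := rfl
lemma kap_two_step (j : ℕ) : kap (j+2) = kap j * ((j:ℝ)+1) / ((j:ℝ)+2) := rfl

/-- convolution square of kap gives the parity sequence -/
lemma conv_kap : ∀ N, (∑ m ∈ Finset.range (N+1), kap m * kap (N-m))
    = if Even N then 1 else 0 := by
  have two_q : ∀ N : ℕ,
      2 * (∑ m ∈ Finset.range (N+1), (m:ℝ) * kap m * kap (N-m))
      = (N:ℝ) * (∑ m ∈ Finset.range (N+1), kap m * kap (N-m)) := by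
    intro N
    have hrefl : (∑ m ∈ Finset.range (N+1), (m:ℝ) * kap m * kap (N-m))
        = ∑ m ∈ Finset.range (N+1), ((N-m:ℕ):ℝ) * kap (N-m) * kap m := by
      rw [← Finset.sum_range_reflect (fun m => ((N-m:ℕ):ℝ) * kap (N-m) * kap m) (N+1)]
      apply Finset.sum_congr rfl
      intro m hm
      have hmN : m ≤ N := by
        have := Finset.mem_range.1 hm; omega
      have e1 : N+1-1-m = N-m := by omega
      have e2 : N-(N-m) = m := by omega
      rw [e1, e2]
    calc 2 * (∑ m ∈ Finset.range (N+1), (m:ℝ) * kap m * kap (N-m))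
        = (∑ m ∈ Finset.range (N+1), (m:ℝ) * kap m * kap (N-m))
          + ∑ m ∈ Finset.range (N+1), ((N-m:ℕ):ℝ) * kap (N-m) * kap m := by
          rw [← hrefl]; ring
      _ = ∑ m ∈ Finset.range (N+1),
            ((m:ℝ) * kap m * kap (N-m) + ((N-m:ℕ):ℝ) * kap (N-m) * kap m) := by
          rw [Finset.sum_add_distrib]
      _ = ∑ m ∈ Finset.range (N+1), (N:ℝ) * (kap m * kap (N-m)) := by
          apply Finset.sum_congr rfl
          intro m hm
          have hmN : m ≤ N := by
            have := Finset.mem_range.1 hm; omega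
          rw [Nat.cast_sub hmN]; ring
      _ = (N:ℝ) * (∑ m ∈ Finset.range (N+1), kap m * kap (N-m)) := by
          rw [Finset.mul_sum]
  have q_step : ∀ N : ℕ,
      (∑ m ∈ Finset.range (N+3), (m:ℝ) * kap m * kap (N+2-m))
      = (∑ m ∈ Finset.range (N+1), (m:ℝ) * kap m * kap (N-m))
        + (∑ m ∈ Finset.range (N+1), kap m * kap (N-m)) := by
    intro N
    rw [Finset.sum_range_succ' (fun m => (m:ℝ) * kap m * kap (N+2-m)) (N+2)]
    rw [Finset.sum_range_succ' (fun m => ((m+1:ℕ):ℝ) * kap (m+1) * kap (N+2-(m+1))) (N+1)]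
    have h0 : ((0:ℕ):ℝ) * kap 0 * kap (N+2-0) = 0 := by simp
    have h1 : ((0+1:ℕ):ℝ) * kap (0+1) * kap (N+2-(0+1)) = 0 := by
      simp [kap_one]
    rw [h0, h1, add_zero, add_zero]
    rw [← Finset.sum_add_distrib]
    apply Finset.sum_congr rfl
    intro m hm
    have hmN : m ≤ N := by
      have := Finset.mem_range.1 hm; omega
    have e1 : (m+1+1) = m+2 := by omega
    have e2 : N+2-(m+1+1) = N-m := by omega
    rw [e1, e2, kap_two_step]
    have h2 : ((m:ℝ)+2) ≠ 0 := by positivity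
    push_cast
    field_simp
  intro N
  induction N using Nat.strong_induction_on with
  | _ N ih =>
    match N with
    | 0 => simp [kap_zero]
    | 1 =>
      rw [show (1:ℕ)+1 = 2 from rfl]
      rw [Finset.sum_range_succ, Finset.sum_range_one]
      simp [kap_one, kap_zero]
    | (j+2) =>
      have hj := ih j (by omega)
      have hq := q_step j
      have h2a := two_q (j+2)
      have h2b := two_q j
      -- 2*q_{j+2} = 2*q_j + 2*c_j  and  2*q_{j+2} = (j+2)*c_{j+2}, 2*q_j = j*c_j
      set cj := (∑ m ∈ Finset.range (j+1), kap m * kap (j-m)) with hcj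
      set cj2 := (∑ m ∈ Finset.range (j+3), kap m * kap (j+2-m)) with hcj2
      have e3 : j+2+1 = j+3 := by omega
      rw [e3] at h2a
      have key : ((j:ℝ)+2) * cj2 = ((j:ℝ)+2) * cj := by
        have : (2:ℝ) * (∑ m ∈ Finset.range (j+3), (m:ℝ) * kap m * kap (j+2-m))
            = (j:ℝ) * cj + 2 * cj := by
          rw [hq]; linarith [h2b]
        rw [this] at h2a
        have : ((j+2:ℕ):ℝ) = (j:ℝ)+2 := by push_cast; ring
        rw [this] at h2a
        linarith
      have hne : ((j:ℝ)+2) ≠ 0 := by positivity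
      have : cj2 = cj := by
        exact mul_left_cancel₀ hne key
      rw [this, hj]
      have : Even (j+2) ↔ Even j := by
        constructor
        · intro h; rcases h with ⟨k, hk⟩; exact ⟨k-1, by omega⟩
        · intro h; rcases h with ⟨k, hk⟩; exact ⟨k+1, by omega⟩
      simp [this]

lemma TT_at_zero (N : ℕ) : TT N 0 = if Even N then 1 else 0 := by
  unfold TT
  have : ∀ k ∈ Finset.range (N+1), (-1:ℝ)^k * laguerre0 k 0 = (-1:ℝ)^k := by
    intro k _
    rw [laguerre0_at_zero, mul_one]
  rw [Finset.sum_congr rfl this, neg_one_geom_sum]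
  rcases Nat.even_or_odd N with h | h
  · have h1 : ¬ Even (N+1) := by
      simpa [Nat.even_add_one] using h
    simp [h, h1]
  · have h2 : ¬ Even N := Nat.not_even_iff_odd.2 h
    have h1 : Even (N+1) := Nat.even_add_one.2 h2
    simp [h1, h2]

/-- positive combinations of Hermite squares -/
noncomputable def GG (n : ℕ) (y : ℝ) : ℝ := ∑ m ∈ Finset.range (n+1), kap (n-m) * eH m y

noncomputable def dGG (n : ℕ) (y : ℝ) : ℝ := ∑ m ∈ Finset.range (n+1), kap (n-m) * deH m y

lemma hasDerivAt_GG (n : ℕ) (y : ℝ) : HasDerivAt (fun t => GG n t) (dGG n y) y := by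
  apply HasDerivAt.fun_sum
  intro m _
  exact (hasDerivAt_eH m y).const_mul _

lemma GG_pair (n : ℕ) (y : ℝ) : dGG (n+1) y + dGG n y = 4*y*GG n y := by
  have hr : dGG (n+1) y = ∑ m ∈ Finset.range (n+1), kap (n-m) * deH (m+1) y := by
    unfold dGG
    rw [Finset.sum_range_succ' (fun m => kap (n+1-m) * deH m y) (n+1)]
    have h0 : kap (n+1-0) * deH 0 y = 0 := by rw [deH_zero_fn, mul_zero]
    rw [h0, add_zero]
    apply Finset.sum_congr rfl
    intro m _
    have e : n+1-(m+1) = n-m := by omega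
    rw [e]
  rw [hr]
  unfold dGG GG
  rw [← Finset.sum_add_distrib, Finset.mul_sum]
  apply Finset.sum_congr rfl
  intro m _
  rw [show kap (n-m) * deH (m+1) y + kap (n-m) * deH m y
      = kap (n-m) * (deH m y + deH (m+1) y) from by ring, deH_pair m y]
  ring

lemma GG_at_zero (N : ℕ) : GG N 0 = TT N 0 := by
  unfold GG
  rw [TT_at_zero]
  have h1 : ∀ m ∈ Finset.range (N+1), kap (N-m) * eH m 0 = kap m * kap (N-m) := by
    intro m _
    rw [eH_at_zero m]
    ring
  rw [Finset.sum_congr rfl h1, conv_kap]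

/-- THE BRIDGE: alternating Laguerre partial sums at 2y² are positive combinations
of normalized Hermite squares -/
lemma bridge : ∀ (n : ℕ) (y : ℝ), TT n (2*y^2) = GG n y := by
  intro n
  induction n with
  | zero =>
    intro y
    rw [TT_zero_fn]
    unfold GG
    simp [eH_zero_fn, kap_zero]
  | succ n ih =>
    -- the difference has zero derivative and vanishes at 0
    have hsq : ∀ y : ℝ, HasDerivAt (fun t : ℝ => 2*t^2) (4*y) y := by
      intro y
      have := (hasDerivAt_pow 2 y).const_mul (2:ℝ)
      simpa using this.congr_deriv (by ring)
    have hder : ∀ y : ℝ, HasDerivAt (fun t => TT (n+1) (2*t^2) - GG (n+1) t) 0 y := by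
      intro y
      have hTT : HasDerivAt (fun t => TT (n+1) (2*t^2)) (dTT (n+1) (2*y^2) * (4*y)) y :=
        by have := (hasDerivAt_TT (n+1) (2*y^2)).comp y (hsq y); exact this
      have hG : HasDerivAt (fun t => GG (n+1) t) (dGG (n+1) y) y := hasDerivAt_GG (n+1) y
      have hTn : HasDerivAt (fun t => TT n (2*t^2)) (dTT n (2*y^2) * (4*y)) y :=
        by have := (hasDerivAt_TT n (2*y^2)).comp y (hsq y); exact this
      have hGn : HasDerivAt (fun t => GG n t) (dGG n y) y := hasDerivAt_GG n y
      have hfneq : (fun t => TT n (2*t^2)) = fun t => GG n t := funext ih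
      rw [hfneq] at hTn
      have huniq : dTT n (2*y^2) * (4*y) = dGG n y := hTn.unique hGn
      have h1 : dTT (n+1) (2*y^2) = TT n (2*y^2) - dTT n (2*y^2) := by
        have := iT n (2*y^2); linarith
      have h2 : dGG (n+1) y = 4*y*GG n y - dGG n y := by
        have := GG_pair n y; linarith
      have heq : dTT (n+1) (2*y^2) * (4*y) = dGG (n+1) y := by
        rw [h1, h2, ← huniq, ih y]
        ring
      have := hTT.fun_sub hG
      rw [heq] at this
      simpa using this
    have hdiff : Differentiable ℝ (fun t => TT (n+1) (2*t^2) - GG (n+1) t) :=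
      fun y => (hder y).differentiableAt
    have hd0 : ∀ x, deriv (fun t => TT (n+1) (2*t^2) - GG (n+1) t) x = 0 :=
      fun x => (hder x).deriv
    intro y
    have hconst := is_const_of_deriv_eq_zero hdiff hd0 y 0
    have hv0 : TT (n+1) (2*(0:ℝ)^2) - GG (n+1) 0 = 0 := by
      rw [GG_at_zero]
      norm_num
    have hz : TT (n+1) (2*y^2) - GG (n+1) y = 0 := by
      rw [hconst]
      exact hv0
    linarith

lemma GG_nonneg (n : ℕ) (y : ℝ) : 0 ≤ GG n y := by
  apply Finset.sum_nonneg
  intro m _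
  exact mul_nonneg (kap_nonneg _) (eH_nonneg m y)

lemma kap_pos_of_even (n : ℕ) (h : Even n) : 0 < kap n := by
  rcases h with ⟨k, hk⟩
  have : n = 2*k := by omega
  rw [this]
  exact kap_even_pos k

lemma GG_pos (n : ℕ) (y : ℝ) (hy : y ≠ 0) : 0 < GG n y := by
  unfold GG
  rcases Nat.even_or_odd n with h | h
  · apply Finset.sum_pos' (fun m _ => mul_nonneg (kap_nonneg _) (eH_nonneg m y))
    refine ⟨0, Finset.mem_range.2 (by omega), ?_⟩
    have : kap (n-0) * eH 0 y = kap n := by rw [eH_zero_fn]; norm_num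
    rw [this]
    exact kap_pos_of_even n h
  · apply Finset.sum_pos' (fun m _ => mul_nonneg (kap_nonneg _) (eH_nonneg m y))
    have hn1 : 1 ≤ n := by
      rcases h with ⟨k, hk⟩; omega
    refine ⟨1, Finset.mem_range.2 (by omega), ?_⟩
    have he : eH 1 y = 2*y^2 := eH_one y
    have hk : 0 < kap (n-1) := by
      apply kap_pos_of_even
      rcases h with ⟨k, hk⟩
      exact ⟨k, by omega⟩
    rw [he]
    have : 0 < 2*y^2 := by positivity
    positivity

/-- main positivity: for n ≥ 1, TT n (2s) + TT (n-1) (2s) ≥ 1 with strict inequality for s > 0 -/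
lemma TT_sum_ge_one (m : ℕ) (s : ℝ) (hs : 0 ≤ s) :
    1 ≤ TT (m+1) (2*s) + TT m (2*s) ∧
    (0 < s → 1 < TT (m+1) (2*s) + TT m (2*s)) := by
  set y := Real.sqrt s with hy
  have hy0 : 0 ≤ y := Real.sqrt_nonneg s
  have hys : y^2 = s := Real.sq_sqrt hs
  set Φ : ℝ → ℝ := fun t => GG (m+1) t + GG m t with hΦ
  have hderiv : ∀ t : ℝ, HasDerivAt Φ (4*t*GG m t) t := by
    intro t
    have h := (hasDerivAt_GG (m+1) t).add (hasDerivAt_GG m t)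
    rw [show dGG (m+1) t + dGG m t = 4*t*GG m t from GG_pair m t] at h
    exact h
  have hmono : StrictMonoOn Φ (Set.Ici (0:ℝ)) := by
    apply strictMonoOn_of_deriv_pos (convex_Ici 0)
    · exact Continuous.continuousOn (by
        have : Differentiable ℝ Φ := fun t => (hderiv t).differentiableAt
        exact this.continuous)
    · intro t ht
      rw [interior_Ici] at ht
      have ht0 : 0 < t := ht
      rw [(hderiv t).deriv]
      have := GG_pos m t (ne_of_gt ht0)
      positivity
  have hΦ0 : Φ 0 = 1 := by
    have h1 : GG (m+1) 0 = TT (m+1) 0 := GG_at_zero (m+1)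
    have h2 : GG m 0 = TT m 0 := GG_at_zero m
    rw [hΦ]
    simp only []
    rw [h1, h2, TT_at_zero, TT_at_zero]
    rcases Nat.even_or_odd m with h | h
    · have h1' : ¬ Even (m+1) := by simpa [Nat.even_add_one] using h
      simp [h, h1']
    · have h2' : ¬ Even m := Nat.not_even_iff_odd.2 h
      have h1' : Even (m+1) := Nat.even_add_one.2 h2'
      simp [h1', h2']
  have hval : TT (m+1) (2*s) + TT m (2*s) = Φ y := by
    rw [hΦ]
    simp only []
    rw [← bridge (m+1) y, ← bridge m y, hys]
  constructor
  · rw [hval, ← hΦ0]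
    rcases eq_or_lt_of_le hy0 with h | h
    · rw [← h]
    · exact le_of_lt (hmono (Set.mem_Ici.2 le_rfl) (Set.mem_Ici.2 hy0) h)
  · intro hspos
    have hypos : 0 < y := Real.sqrt_pos.2 hspos
    rw [hval, ← hΦ0]
    exact hmono (Set.mem_Ici.2 le_rfl) (Set.mem_Ici.2 hy0) hypos

lemma continuous_laguerre0 (k : ℕ) : Continuous (fun x => laguerre0 k x) := by
  have h : Differentiable ℝ (fun x => laguerre0 k x) :=
    fun x => (hasDerivAt_laguerre0 k x).differentiableAt
  exact h.continuous

lemma continuous_TT (n : ℕ) : Continuous (fun x => TT n x) := by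
  have h : Differentiable ℝ (fun x => TT n x) :=
    fun x => (hasDerivAt_TT n x).differentiableAt
  exact h.continuous

lemma TT_pair_at_zero (m : ℕ) : TT (m+1) 0 + TT m 0 = 1 := by
  rw [TT_at_zero, TT_at_zero]
  rcases Nat.even_or_odd m with h | h
  · have h1' : ¬ Even (m+1) := by simpa [Nat.even_add_one] using h
    simp [h, h1']
  · have h2' : ¬ Even m := Nat.not_even_iff_odd.2 h
    have h1' : Even (m+1) := Nat.even_add_one.2 h2'
    simp [h1', h2']

/-- FTC evaluation of the Laguerre integral -/
lemma integral_lag (n : ℕ) (s : ℝ) :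
    ∫ t in (0:ℝ)..s, Real.exp (-t) * ((-1:ℝ)^(n+1) * laguerre0 (n+1) (2*t))
      = 1 - Real.exp (-s) * (TT (n+1) (2*s) + TT n (2*s)) := by
  set F : ℝ → ℝ := fun t => -(Real.exp (-t) * (TT (n+1) (2*t) + TT n (2*t))) with hF
  have hderiv : ∀ t : ℝ, HasDerivAt F
      (Real.exp (-t) * ((-1:ℝ)^(n+1) * laguerre0 (n+1) (2*t))) t := by
    intro t
    have hexp : HasDerivAt (fun t : ℝ => Real.exp (-t)) (-Real.exp (-t)) t := by
      have h1 : HasDerivAt (fun t : ℝ => -t) (-1) t := (hasDerivAt_id t).neg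
      simpa using h1.exp
    have hlin : HasDerivAt (fun t : ℝ => 2*t) 2 t := by
      simpa using (hasDerivAt_id t).const_mul (2:ℝ)
    have hT1 : HasDerivAt (fun t => TT (n+1) (2*t)) (dTT (n+1) (2*t) * 2) t :=
      (hasDerivAt_TT (n+1) (2*t)).comp t hlin
    have hT0 : HasDerivAt (fun t => TT n (2*t)) (dTT n (2*t) * 2) t :=
      (hasDerivAt_TT n (2*t)).comp t hlin
    have hmul := hexp.fun_mul (hT1.fun_add hT0)
    have hval : -Real.exp (-t) * (TT (n+1) (2*t) + TT n (2*t))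
          + Real.exp (-t) * (dTT (n+1) (2*t) * 2 + dTT n (2*t) * 2)
        = -(Real.exp (-t) * ((-1:ℝ)^(n+1) * laguerre0 (n+1) (2*t))) := by
      have hiT : dTT (n+1) (2*t) + dTT n (2*t) = TT n (2*t) := iT n (2*t)
      have hTs : TT (n+1) (2*t) = TT n (2*t) + (-1:ℝ)^(n+1) * laguerre0 (n+1) (2*t) :=
        TT_succ n (2*t)
      rw [hTs]
      linear_combination (2*Real.exp (-t)) * hiT
    rw [hval] at hmul
    have hres := hmul.fun_neg
    rw [neg_neg] at hres
    exact hres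
  have hcont : Continuous (fun t => Real.exp (-t) * ((-1:ℝ)^(n+1) * laguerre0 (n+1) (2*t))) := by
    apply Continuous.mul
    · exact Real.continuous_exp.comp continuous_neg
    · exact continuous_const.mul ((continuous_laguerre0 (n+1)).comp (continuous_const.mul continuous_id))
  have := intervalIntegral.integral_eq_sub_of_hasDerivAt
      (f := F) (fun t _ => hderiv t) (hcont.intervalIntegrable 0 s)
  rw [this, hF]
  simp only []
  rw [show (2:ℝ)*0 = 0 by ring]
  have hpz := TT_pair_at_zero n
  have e0 : Real.exp (-(0:ℝ)) = 1 := by norm_num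
  rw [hpz, e0]
  ring

lemma integral_exp_neg (s : ℝ) :
    ∫ t in (0:ℝ)..s, Real.exp (-t) = 1 - Real.exp (-s) := by
  have hderiv : ∀ t : ℝ, HasDerivAt (fun t : ℝ => -Real.exp (-t)) (Real.exp (-t)) t := by
    intro t
    have h1 : HasDerivAt (fun t : ℝ => -t) (-1) t := (hasDerivAt_id t).neg
    have := h1.exp
    have h2 := this.fun_neg
    simpa using h2
  have hcont : Continuous (fun t : ℝ => Real.exp (-t)) :=
    Real.continuous_exp.comp continuous_neg
  have := intervalIntegral.integral_eq_sub_of_hasDerivAt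
      (f := fun t : ℝ => -Real.exp (-t)) (fun t _ => hderiv t) (hcont.intervalIntegrable 0 s)
  rw [this]
  have e0 : Real.exp (-(0:ℝ)) = 1 := by norm_num
  simp only [e0]
  ring

lemma measurable_normSq' : Measurable (fun z : ℂ => Complex.normSq z) :=
  Complex.continuous_normSq.measurable

lemma sq_min_eq (a r : ℝ) (ha : 0 ≤ a) (hr : 0 ≤ r) :
    (min (Real.sqrt a) r)^2 = min a (r^2) := by
  rcases le_total (Real.sqrt a) r with h | h
  · rw [min_eq_left h, Real.sq_sqrt ha, min_eq_left]
    calc a = (Real.sqrt a)^2 := (Real.sq_sqrt ha).symm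
    _ ≤ r^2 := by
      apply pow_le_pow_left₀ (Real.sqrt_nonneg a) h
  · rw [min_eq_right h, min_eq_right]
    calc r^2 ≤ (Real.sqrt a)^2 := by
          apply pow_le_pow_left₀ hr h
    _ = a := Real.sq_sqrt ha

lemma normSq_map_measure (r : ℝ) (hr : 0 ≤ r) :
    Measure.map (fun z : ℂ => Complex.normSq z) (volume.restrict (Metric.closedBall 0 r))
      = (ENNReal.ofReal Real.pi) • (volume.restrict (Set.Icc 0 (r^2))) := by
  haveI hfin : IsFiniteMeasure (volume.restrict (Metric.closedBall (0:ℂ) r)) := by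
    constructor
    rw [Measure.restrict_apply_univ]
    exact (ProperSpace.isCompact_closedBall _ _).measure_lt_top
  haveI hfin2 : IsFiniteMeasure
      (Measure.map (fun z : ℂ => Complex.normSq z) (volume.restrict (Metric.closedBall 0 r))) := by
    constructor
    rw [Measure.map_apply measurable_normSq' MeasurableSet.univ, Set.preimage_univ,
      Measure.restrict_apply_univ]
    exact (ProperSpace.isCompact_closedBall _ _).measure_lt_top
  apply MeasureTheory.Measure.ext_of_Iic
  intro a
  rw [Measure.map_apply measurable_normSq' measurableSet_Iic,
    Measure.restrict_apply (measurable_normSq' measurableSet_Iic),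
    Measure.smul_apply, Measure.restrict_apply measurableSet_Iic, smul_eq_mul]
  rcases lt_or_ge a 0 with ha | ha
  · have h1 : (fun z : ℂ => Complex.normSq z) ⁻¹' (Set.Iic a) = ∅ := by
      ext z
      simp only [Set.mem_preimage, Set.mem_Iic, Set.mem_empty_iff_false, iff_false, not_le]
      exact lt_of_lt_of_le ha (Complex.normSq_nonneg z)
    have h2 : Set.Iic a ∩ Set.Icc 0 (r^2) = ∅ := by
      ext t
      simp only [Set.mem_inter_iff, Set.mem_Iic, Set.mem_Icc, Set.mem_empty_iff_false, iff_false]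
      rintro ⟨h3, h4, _⟩
      linarith
    rw [h1, h2]
    simp
  · have h1 : (fun z : ℂ => Complex.normSq z) ⁻¹' (Set.Iic a) ∩ Metric.closedBall 0 r
        = Metric.closedBall (0:ℂ) (min (Real.sqrt a) r) := by
      ext z
      simp only [Set.mem_preimage, Set.mem_Iic, Set.mem_inter_iff, Metric.mem_closedBall,
        Complex.dist_eq, sub_zero, le_min_iff]
      constructor
      · rintro ⟨h3, h4⟩
        refine ⟨?_, h4⟩
        rw [← Real.sqrt_sq (norm_nonneg z)]
        apply Real.sqrt_le_sqrt
        rwa [← Complex.normSq_eq_norm_sq]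
      · rintro ⟨h3, h4⟩
        refine ⟨?_, h4⟩
        rw [Complex.normSq_eq_norm_sq]
        calc ‖z‖^2 ≤ (Real.sqrt a)^2 := by
              apply pow_le_pow_left₀ (norm_nonneg z) h3
        _ = a := Real.sq_sqrt ha
    have h2 : Set.Iic a ∩ Set.Icc 0 (r^2) = Set.Icc 0 (min a (r^2)) := by
      ext t
      simp only [Set.mem_inter_iff, Set.mem_Iic, Set.mem_Icc, le_min_iff]
      constructor
      · rintro ⟨h3, h4, h5⟩; exact ⟨h4, h3, h5⟩
      · rintro ⟨h3, h4, h5⟩; exact ⟨h4, h3, h5⟩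
    rw [h1, h2, Complex.volume_closedBall, Real.volume_Icc]
    have hmin : 0 ≤ min (Real.sqrt a) r := le_min (Real.sqrt_nonneg a) hr
    rw [← ENNReal.ofReal_pow hmin, sq_min_eq a r ha hr]
    rw [← NNReal.coe_real_pi, ← ENNReal.ofReal_coe_nnreal, NNReal.coe_real_pi]
    rw [← ENNReal.ofReal_mul (by positivity : (0:ℝ) ≤ min a (r^2))]
    rw [← ENNReal.ofReal_mul Real.pi_pos.le]
    congr 1
    ring

lemma integral_disc (f : ℝ → ℝ) (hf : Continuous f) (r : ℝ) (hr : 0 ≤ r) :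
    ∫ z in Metric.closedBall (0:ℂ) r, f (Complex.normSq z)
      = Real.pi * ∫ t in (0:ℝ)..(r^2), f t := by
  have h1 : ∫ z in Metric.closedBall (0:ℂ) r, f (Complex.normSq z)
      = ∫ t, f t ∂(Measure.map (fun z : ℂ => Complex.normSq z)
          (volume.restrict (Metric.closedBall 0 r))) := by
    rw [integral_map measurable_normSq'.aemeasurable hf.aestronglyMeasurable]
  rw [h1, normSq_map_measure r hr, integral_smul_measure,
    ENNReal.toReal_ofReal Real.pi_pos.le, smul_eq_mul]
  congr 1
  rw [intervalIntegral.integral_of_le (by positivity : (0:ℝ) ≤ r^2)]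
  exact MeasureTheory.integral_Icc_eq_integral_Ioc

theorem flandrin_disc (lam : ℕ) (r : ℝ) (hr : 0 ≤ r) :
    (∫ z in Metric.closedBall (0 : ℂ) r,
        (-1 : ℝ) ^ lam * Real.exp (-(Complex.normSq z)) * laguerre0 lam (2 * Complex.normSq z))
      ≤ ∫ z in Metric.closedBall (0 : ℂ) r, Real.exp (-(Complex.normSq z)) ∧
    (∫ z in Metric.closedBall (0 : ℂ) r, Real.exp (-(Complex.normSq z)))
      = Real.pi * (1 - Real.exp (-(r ^ 2))) ∧
    (0 < lam → 0 < r →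
      (∫ z in Metric.closedBall (0 : ℂ) r,
          (-1 : ℝ) ^ lam * Real.exp (-(Complex.normSq z)) * laguerre0 lam (2 * Complex.normSq z))
        < ∫ z in Metric.closedBall (0 : ℂ) r, Real.exp (-(Complex.normSq z))) := by
  have hexpc : Continuous (fun t : ℝ => Real.exp (-t)) :=
    Real.continuous_exp.comp continuous_neg
  have hB : (∫ z in Metric.closedBall (0:ℂ) r, Real.exp (-(Complex.normSq z)))
      = Real.pi * (1 - Real.exp (-(r^2))) := by
    have h := integral_disc (fun t => Real.exp (-t)) hexpc r hr
    rw [h, integral_exp_neg]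
  have hf1c : Continuous (fun t : ℝ => (-1:ℝ)^lam * Real.exp (-t) * laguerre0 lam (2*t)) := by
    apply Continuous.mul
    · exact continuous_const.mul hexpc
    · exact (continuous_laguerre0 lam).comp (continuous_const.mul continuous_id)
  have hA : (∫ z in Metric.closedBall (0:ℂ) r,
        (-1 : ℝ) ^ lam * Real.exp (-(Complex.normSq z)) * laguerre0 lam (2 * Complex.normSq z))
      = Real.pi * ∫ t in (0:ℝ)..(r^2), (-1:ℝ)^lam * Real.exp (-t) * laguerre0 lam (2*t) :=
    integral_disc (fun t => (-1:ℝ)^lam * Real.exp (-t) * laguerre0 lam (2*t)) hf1c r hr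
  refine ⟨?_, hB, ?_⟩
  · rcases Nat.eq_zero_or_pos lam with h0 | hpos
    · subst h0
      apply le_of_eq
      simp only [pow_zero, one_mul, laguerre0_zero, mul_one]
    · obtain ⟨n, rfl⟩ : ∃ n, lam = n+1 := ⟨lam-1, by omega⟩
      rw [hA, hB]
      have hcomm : (fun t => (-1:ℝ)^(n+1) * Real.exp (-t) * laguerre0 (n+1) (2*t))
          = (fun t => Real.exp (-t) * ((-1:ℝ)^(n+1) * laguerre0 (n+1) (2*t))) := by
        funext t; ring
      rw [hcomm, integral_lag n (r^2)]
      have hX := (TT_sum_ge_one n (r^2) (sq_nonneg r)).1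
      have hE := Real.exp_pos (-(r^2))
      nlinarith [mul_nonneg (mul_nonneg Real.pi_pos.le hE.le) (sub_nonneg.2 hX)]
  · intro hlam hrpos
    obtain ⟨n, rfl⟩ : ∃ n, lam = n+1 := ⟨lam-1, by omega⟩
    rw [hA, hB]
    have hcomm : (fun t => (-1:ℝ)^(n+1) * Real.exp (-t) * laguerre0 (n+1) (2*t))
        = (fun t => Real.exp (-t) * ((-1:ℝ)^(n+1) * laguerre0 (n+1) (2*t))) := by
      funext t; ring
    rw [hcomm, integral_lag n (r^2)]
    have hX := (TT_sum_ge_one n (r^2) (sq_nonneg r)).2 (by positivity)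
    have hE := Real.exp_pos (-(r^2))
    nlinarith [mul_pos (mul_pos Real.pi_pos hE) (sub_pos.2 hX)]
end
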